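/- For α ∈ (0,1)∪(1,∞), the Sibson mutual information of order α between distribution p_X and channel p_{Y|X} equals the Arimoto mutual information of order α between the (1/α)-tilted distribution p_{X_{1/α}} and the same channel: I_α^S(p_X, p_{Y|X}) = I_α^A(p_{X_{1/α}}, p_{Y|X}). -/

import Mathlib

open BigOperators

/-- `p` is a probability distribution on the finite set `X`. -/
def IsDist {X : Type*} [Fintype X] (p : X → ℝ) : Prop :=
  (∀ x, 0 ≤ p x) ∧ ∑ x, p x = 1

/-- `W` is a channel from `X` to `Y`. -/
def IsChannel {X Y : Type*} [Fintype Y] (W : X → Y → ℝ) : Prop :=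
  ∀ x, (∀ y, 0 ≤ W x y) ∧ ∑ y, W x y = 1

/-- The α-tilted (escort) distribution of `p`. -/
noncomputable def tilt {X : Type*} [Fintype X] (p : X → ℝ) (a : ℝ) : X → ℝ :=
  fun x => p x ^ a / ∑ x', p x' ^ a

/-- The Rényi entropy of order `a` of a distribution `p`. -/
noncomputable def renyi {X : Type*} [Fintype X] (p : X → ℝ) (a : ℝ) : ℝ :=
  (1 / (1 - a)) * Real.log (∑ x, p x ^ a)

/-- The Arimoto MI `I_α^A(p, W) = H_α(p) - H_α^A(X|Y)` of distribution `p` and channel `W`. -/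
noncomputable def arimotoMI {X Y : Type*} [Fintype X] [Fintype Y]
    (α : ℝ) (p : X → ℝ) (W : X → Y → ℝ) : ℝ :=
  renyi p α - (α / (1 - α)) * Real.log (∑ y, (∑ x, p x ^ α * W x y ^ α) ^ (1 / α))

/-- Sibson MI of order α (as the minimum over `q_Y` of `D_α(p_X p_{Y|X} ‖ p_X q_Y)`)
equals the Arimoto MI of order α of the (1/α)-tilted input distribution and the
same channel: `I_α^S(p_X, p_{Y|X}) = I_α^A(p_{X_{1/α}}, p_{Y|X})`. -/
theorem sibsonMI_eq_arimotoMI_tilt {X Y : Type*} [Fintype X] [Fintype Y] [Nonempty Y]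
    (α : ℝ) (hα0 : 0 < α) (hα1 : α ≠ 1)
    (p : X → ℝ) (W : X → Y → ℝ)
    (hp : IsDist p) (hps : ∀ x, 0 < p x) (hW : IsChannel W)
    (hWc : ∀ y, ∃ x, 0 < W x y) :
    IsLeast {v : ℝ | ∃ q : Y → ℝ, IsDist q ∧ (∀ y, 0 < q y) ∧
        v = (1 / (α - 1)) * Real.log (∑ x, ∑ y,
              (p x * W x y) ^ α * (p x * q y) ^ (1 - α))}
      (arimotoMI α (tilt p (1 / α)) W) := by
  obtain ⟨hp0, hp1⟩ := hp
  have hαne : α ≠ 0 := ne_of_gt hα0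
  have h1α : (1 : ℝ) - α ≠ 0 := sub_ne_zero.mpr (Ne.symm hα1)
  have hα1' : α - 1 ≠ 0 := sub_ne_zero.mpr hα1
  set B : Y → ℝ := fun y => ∑ x, p x * W x y ^ α with hBdef
  have hB : ∀ y, 0 < B y := by
    intro y
    obtain ⟨x0, hx0⟩ := hWc y
    refine Finset.sum_pos'
      (fun x _ => mul_nonneg (hp0 x) (Real.rpow_nonneg ((hW x).1 y) α)) ?_
    exact ⟨x0, Finset.mem_univ x0, mul_pos (hps x0) (Real.rpow_pos_of_pos hx0 α)⟩
  set S : ℝ := ∑ y, B y ^ (1 / α) with hSdef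
  have hS : 0 < S :=
    Finset.sum_pos (fun y _ => Real.rpow_pos_of_pos (hB y) _) Finset.univ_nonempty
  set T : ℝ := ∑ x, p x ^ (1 / α) with hTdef
  have hXne : (Finset.univ : Finset X).Nonempty := by
    rcases (Finset.univ : Finset X).eq_empty_or_nonempty with h | h
    · rw [h, Finset.sum_empty] at hp1; norm_num at hp1
    · exact h
  have hT : 0 < T :=
    Finset.sum_pos (fun x _ => Real.rpow_pos_of_pos (hps x) _) hXne
  have hTα : (0 : ℝ) < T ^ α := Real.rpow_pos_of_pos hT α
  -- Rewrite of the double sum for any nonnegative q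
  have key : ∀ q : Y → ℝ, (∀ y, 0 ≤ q y) →
      (∑ x, ∑ y, (p x * W x y) ^ α * (p x * q y) ^ (1 - α))
        = ∑ y, B y * q y ^ (1 - α) := by
    intro q hq
    rw [Finset.sum_comm]
    refine Finset.sum_congr rfl fun y _ => ?_
    rw [hBdef]
    rw [Finset.sum_mul]
    refine Finset.sum_congr rfl fun x _ => ?_
    rw [Real.mul_rpow (hp0 x) ((hW x).1 y), Real.mul_rpow (hp0 x) (hq y)]
    have h1 : p x ^ α * W x y ^ α * (p x ^ (1 - α) * q y ^ (1 - α))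
        = (p x ^ α * p x ^ (1 - α)) * (W x y ^ α * q y ^ (1 - α)) := by ring
    have h2 : α + (1 - α) = 1 := by ring
    rw [h1, ← Real.rpow_add (hps x), h2, Real.rpow_one]
    ring
  -- The Arimoto MI of the tilted distribution equals (α/(α-1)) log S
  have htilt1 : ∀ x : X, tilt p (1 / α) x ^ α = p x / T ^ α := by
    intro x
    show (p x ^ (1 / α) / T) ^ α = p x / T ^ α
    rw [Real.div_rpow (Real.rpow_nonneg (hp0 x) _) hT.le,
      ← Real.rpow_mul (hp0 x), one_div, inv_mul_cancel₀ hαne, Real.rpow_one]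
  have hren : renyi (tilt p (1 / α)) α = (α / (α - 1)) * Real.log T := by
    rw [renyi]
    have hsum : ∑ x, tilt p (1 / α) x ^ α = 1 / T ^ α := by
      simp_rw [htilt1]
      rw [← Finset.sum_div, hp1]
    rw [hsum, Real.log_div one_ne_zero (ne_of_gt hTα), Real.log_one,
      Real.log_rpow hT]
    field_simp
    ring
  have hAri : arimotoMI α (tilt p (1 / α)) W = (α / (α - 1)) * Real.log S := by
    have hsum2 : ∀ y : Y, ∑ x, tilt p (1 / α) x ^ α * W x y ^ α = B y / T ^ α := by
      intro y
      simp_rw [htilt1, div_mul_eq_mul_div]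
      rw [← Finset.sum_div]
    have hsum3 : ∑ y, (∑ x, tilt p (1 / α) x ^ α * W x y ^ α) ^ (1 / α) = S / T := by
      rw [hSdef, Finset.sum_div]
      refine Finset.sum_congr rfl fun y _ => ?_
      rw [hsum2 y, Real.div_rpow (hB y).le hTα.le, ← Real.rpow_mul hT.le,
        mul_one_div, div_self hαne, Real.rpow_one]
    rw [arimotoMI, hren, hsum3, Real.log_div (ne_of_gt hS) (ne_of_gt hT)]
    field_simp
    ring
  rw [hAri]
  constructor
  · -- membership: q y = B y ^ (1/α) / S attains the value
    refine ⟨fun y => B y ^ (1 / α) / S, ⟨fun y => div_nonneg (Real.rpow_nonneg (hB y).le _) hS.le, ?_⟩,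
      fun y => div_pos (Real.rpow_pos_of_pos (hB y) _) hS, ?_⟩
    · rw [← Finset.sum_div, ← hSdef, div_self (ne_of_gt hS)]
    · rw [key _ (fun y => (div_pos (Real.rpow_pos_of_pos (hB y) _) hS).le)]
      have hterm : ∀ y : Y, B y * (B y ^ (1 / α) / S) ^ (1 - α)
          = B y ^ (1 / α) / S ^ (1 - α) := by
        intro y
        rw [Real.div_rpow (Real.rpow_nonneg (hB y).le _) hS.le,
          ← Real.rpow_mul (hB y).le]
        rw [mul_div_assoc']
        congr 1
        nth_rewrite 1 [← Real.rpow_one (B y)]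
        rw [← Real.rpow_add (hB y)]
        congr 1
        field_simp
        ring
      have hsum : ∑ y, B y * (B y ^ (1 / α) / S) ^ (1 - α) = S ^ α := by
        simp_rw [hterm]
        rw [← Finset.sum_div, ← hSdef]
        nth_rewrite 1 [← Real.rpow_one S]
        rw [← Real.rpow_sub hS]
        norm_num
      rw [hsum, Real.log_rpow hS]
      ring
  · -- lower bound
    rintro v ⟨q, ⟨hq0, hq1⟩, hqpos, rfl⟩
    rw [key q hq0]
    set M : ℝ := ∑ y, B y * q y ^ (1 - α) with hMdef
    have hM : 0 < M :=
      Finset.sum_pos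
        (fun y _ => mul_pos (hB y) (Real.rpow_pos_of_pos (hqpos y) _))
        Finset.univ_nonempty
    rcases lt_or_gt_of_ne hα1 with hlt | hgt
    · -- α < 1 : M ≤ S^α, and 1/(α-1) < 0
      have hconj : Real.HolderConjugate (1 / α) (1 / (1 - α)) := by
        refine ⟨?_, one_div_pos.mpr hα0, div_pos one_pos (by linarith)⟩
        rw [one_div, one_div, inv_inv, inv_inv, inv_one]
        ring
      have hq_pow : ∑ y, (q y ^ (1 - α)) ^ (1 / (1 - α)) = 1 := by
        have : ∀ y : Y, (q y ^ (1 - α)) ^ (1 / (1 - α)) = q y := fun y => by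
          rw [← Real.rpow_mul (hq0 y), mul_one_div, div_self h1α, Real.rpow_one]
        simp_rw [this]
        exact hq1
      have hMS : M ≤ S ^ α := by
        have hH := Real.inner_le_Lp_mul_Lq_of_nonneg (s := Finset.univ)
          (f := B) (g := fun y => q y ^ (1 - α)) hconj
          (fun y _ => (hB y).le) (fun y _ => Real.rpow_nonneg (hq0 y) _)
        rw [hq_pow, Real.one_rpow, mul_one, one_div_one_div] at hH
        exact hH
      have hlog : Real.log M ≤ α * Real.log S := by
        calc Real.log M ≤ Real.log (S ^ α) := Real.log_le_log hM hMS
          _ = α * Real.log S := Real.log_rpow hS α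
      have hneg : 1 / (α - 1) ≤ 0 := by
        apply le_of_lt
        apply div_neg_of_pos_of_neg one_pos
        linarith
      have := mul_le_mul_of_nonpos_left hlog hneg
      calc α / (α - 1) * Real.log S = 1 / (α - 1) * (α * Real.log S) := by ring
        _ ≤ 1 / (α - 1) * Real.log M := this
    · -- α > 1 : S^α ≤ M, and 1/(α-1) > 0
      have hconj : Real.HolderConjugate α (α / (α - 1)) :=
        (Real.holderConjugate_iff_eq_conjExponent hgt).2 rfl
      have hSM : S ^ α ≤ M := by
        have hH := Real.inner_le_Lp_mul_Lq_of_nonneg (s := Finset.univ)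
          (f := fun y => (B y * q y ^ (1 - α)) ^ (1 / α))
          (g := fun y => q y ^ ((α - 1) / α)) hconj
          (fun y _ => Real.rpow_nonneg
            (mul_nonneg (hB y).le (Real.rpow_nonneg (hq0 y) _)) _)
          (fun y _ => Real.rpow_nonneg (hq0 y) _)
        have hlhs : ∀ y : Y, (B y * q y ^ (1 - α)) ^ (1 / α) * q y ^ ((α - 1) / α)
            = B y ^ (1 / α) := by
          intro y
          rw [Real.mul_rpow (hB y).le (Real.rpow_nonneg (hq0 y) _),
            ← Real.rpow_mul (hq0 y), mul_assoc, ← Real.rpow_add (hqpos y)]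
          have : (1 - α) * (1 / α) + (α - 1) / α = 0 := by field_simp; ring
          rw [this, Real.rpow_zero, mul_one]
        have hf : ∀ y : Y, ((B y * q y ^ (1 - α)) ^ (1 / α)) ^ α
            = B y * q y ^ (1 - α) := by
          intro y
          rw [← Real.rpow_mul (mul_nonneg (hB y).le (Real.rpow_nonneg (hq0 y) _)),
            one_div, inv_mul_cancel₀ hαne, Real.rpow_one]
        have hg : ∑ y, (q y ^ ((α - 1) / α)) ^ (α / (α - 1)) = 1 := by
          have : ∀ y : Y, (q y ^ ((α - 1) / α)) ^ (α / (α - 1)) = q y := fun y => by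
            rw [← Real.rpow_mul (hq0 y)]
            have : (α - 1) / α * (α / (α - 1)) = 1 := by field_simp
            rw [this, Real.rpow_one]
          simp_rw [this]
          exact hq1
        simp_rw [hlhs, hf] at hH
        rw [hg, Real.one_rpow, mul_one, ← hSdef, ← hMdef] at hH
        -- hH : S ≤ M ^ (1/α)
        calc S ^ α ≤ (M ^ (1 / α)) ^ α :=
              Real.rpow_le_rpow hS.le hH hα0.le
          _ = M := by
              rw [← Real.rpow_mul hM.le, one_div, inv_mul_cancel₀ hαne, Real.rpow_one]
      have hlog : α * Real.log S ≤ Real.log M := by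
        calc α * Real.log S = Real.log (S ^ α) := (Real.log_rpow hS α).symm
          _ ≤ Real.log M := Real.log_le_log (Real.rpow_pos_of_pos hS α) hSM
      have hpos : (0 : ℝ) ≤ 1 / (α - 1) := le_of_lt (div_pos one_pos (by linarith))
      have := mul_le_mul_of_nonneg_left hlog hpos
      calc α / (α - 1) * Real.log S = 1 / (α - 1) * (α * Real.log S) := by ring
        _ ≤ 1 / (α - 1) * Real.log M := this
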